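/- For t ∈ (-1,1), δ > 0, and 0 < u < 1, the function Φ_t(u) = 1/δ - u^{-δ}·(1-2tu+u²)^{δ/2}·∫_0^u v^{δ-1}·(1-2tv+v²)^{-δ/2} dv satisfies the ODE (1-2tu+u²)·Φ_t'(u) = t - u - δ·(u^{-1}-t)·Φ_t(u), and Φ_t(u) → 0 as u → 0⁺. -/

import Mathlib

open intervalIntegral

theorem stmt_13 (δ : ℝ) (hδ : 0 < δ) (t : ℝ) (ht : t ∈ Set.Ioo (-1 : ℝ) 1)
    (Φ : ℝ → ℝ)
    (hΦ : ∀ u : ℝ, 0 < u →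
      Φ u = 1 / δ - u ^ (-δ) * (1 - 2 * t * u + u ^ 2) ^ (δ / 2) *
        ∫ v in (0 : ℝ)..u, v ^ (δ - 1) * (1 - 2 * t * v + v ^ 2) ^ (-(δ / 2))) :
    (∀ u ∈ Set.Ioo (0 : ℝ) 1,
      HasDerivAt Φ ((t - u - δ * (u⁻¹ - t) * Φ u) / (1 - 2 * t * u + u ^ 2)) u) ∧
    Filter.Tendsto Φ (nhdsWithin 0 (Set.Ioi 0)) (nhds 0) := by
  obtain ⟨ht1, ht2⟩ := ht
  have hQ : ∀ v : ℝ, 0 < 1 - 2 * t * v + v ^ 2 := by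
    intro v; nlinarith [sq_nonneg (v - t)]
  set f : ℝ → ℝ := fun v => v ^ (δ - 1) * (1 - 2 * t * v + v ^ 2) ^ (-(δ / 2)) with hf
  set I : ℝ → ℝ := fun u => ∫ v in (0:ℝ)..u, f v with hIdef
  have hg : Continuous (fun v : ℝ => (1 - 2 * t * v + v ^ 2) ^ (-(δ/2))) := by
    apply Continuous.rpow_const (by continuity)
    intro v; exact Or.inl (hQ v).ne'
  have hint : ∀ u : ℝ, IntervalIntegrable f MeasureTheory.volume 0 u := by
    intro u
    exact (intervalIntegral.intervalIntegrable_rpow' (by linarith)).mul_continuousOn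
      hg.continuousOn
  have hfmeas : Measurable f := by
    apply Measurable.mul ?_ hg.measurable
    fun_prop
  have hΦ' : ∀ u : ℝ, 0 < u →
      Φ u = 1 / δ - u ^ (-δ) * (1 - 2 * t * u + u ^ 2) ^ (δ / 2) * I u := hΦ
  constructor
  · rintro u ⟨hu0, hu1⟩
    have hune : u ≠ 0 := hu0.ne'
    have hqpos := hQ u
    have hqne : (1 - 2 * t * u + u ^ 2) ≠ 0 := hqpos.ne'
    -- derivative of I
    have hcf : ContinuousAt f u := by
      apply ContinuousAt.mul ?_ hg.continuousAt
      exact Real.continuousAt_rpow_const u (δ - 1) (Or.inl hune)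
    have hfI : HasDerivAt I (f u) u :=
      intervalIntegral.integral_hasDerivAt_right (hint u)
        (hfmeas.aestronglyMeasurable.stronglyMeasurableAtFilter) hcf
    -- derivative of G = u^(-δ) * (Q u)^(δ/2)
    have h1 : HasDerivAt (fun u : ℝ => u ^ (-δ)) (-δ * u ^ (-δ - 1)) u := by
      simpa using Real.hasDerivAt_rpow_const (p := -δ) (Or.inl hune)
    have hq : HasDerivAt (fun u : ℝ => 1 - 2 * t * u + u ^ 2) (-(2*t) + 2*u) u := by
      have h := ((hasDerivAt_id u).const_mul (2*t)).const_sub 1 |>.add ((hasDerivAt_pow 2 u))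
      exact h.congr_deriv (by ring)
    have h2 : HasDerivAt (fun u : ℝ => (1 - 2 * t * u + u ^ 2) ^ (δ/2))
        ((δ/2) * (1 - 2 * t * u + u ^ 2) ^ (δ/2 - 1) * (-(2*t) + 2*u)) u := by
      have h := hq.rpow_const (p := δ/2) (Or.inl hqne)
      convert h using 1; ring
    have hG : HasDerivAt (fun u : ℝ => u ^ (-δ) * (1 - 2 * t * u + u ^ 2) ^ (δ / 2))
        ((-δ * u ^ (-δ - 1)) * (1 - 2 * t * u + u ^ 2) ^ (δ / 2)
          + u ^ (-δ) * ((δ/2) * (1 - 2 * t * u + u ^ 2) ^ (δ/2 - 1) * (-(2*t) + 2*u))) u :=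
      h1.mul h2
    have hd : HasDerivAt (fun u : ℝ => 1 / δ - u ^ (-δ) * (1 - 2 * t * u + u ^ 2) ^ (δ / 2) * I u)
        (0 - (((-δ * u ^ (-δ - 1)) * (1 - 2 * t * u + u ^ 2) ^ (δ / 2)
          + u ^ (-δ) * ((δ/2) * (1 - 2 * t * u + u ^ 2) ^ (δ/2 - 1) * (-(2*t) + 2*u))) * I u
          + u ^ (-δ) * (1 - 2 * t * u + u ^ 2) ^ (δ / 2) * f u)) u :=
      (hasDerivAt_const u (1/δ)).sub (hG.mul hfI)
    have hΦd : HasDerivAt Φ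
        (0 - (((-δ * u ^ (-δ - 1)) * (1 - 2 * t * u + u ^ 2) ^ (δ / 2)
          + u ^ (-δ) * ((δ/2) * (1 - 2 * t * u + u ^ 2) ^ (δ/2 - 1) * (-(2*t) + 2*u))) * I u
          + u ^ (-δ) * (1 - 2 * t * u + u ^ 2) ^ (δ / 2) * f u)) u := by
      apply hd.congr_of_eventuallyEq
      filter_upwards [Ioi_mem_nhds hu0] with x hx
      exact hΦ' x hx
    convert hΦd using 1
    -- now the algebra
    set q := 1 - 2 * t * u + u ^ 2 with hqdef
    set A := u ^ (-δ) with hA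
    set B := q ^ (δ/2) with hB
    set C := u ^ δ with hC
    set D := q ^ (-(δ/2)) with hD
    have hAC : A * C = 1 := by
      rw [hA, hC, ← Real.rpow_add hu0]; simp
    have hBD : B * D = 1 := by
      rw [hB, hD, ← Real.rpow_add hqpos]; simp
    have hP : A * B * I u = 1 / δ - Φ u := by
      rw [hΦ' u hu0]; ring
    have e1 : u ^ (-δ - 1) = A * u⁻¹ := by
      rw [hA, Real.rpow_sub hu0, Real.rpow_one, div_eq_mul_inv]
    have e2 : q ^ (δ/2 - 1) = B / q := by
      rw [hB, Real.rpow_sub hqpos, Real.rpow_one]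
    have e3 : u ^ (δ - 1) = C / u := by
      rw [hC, Real.rpow_sub hu0, Real.rpow_one]
    simp only [hf]
    rw [e1, e2, e3, ← hD]
    have step1 : 0 - (((-δ * (A * u⁻¹)) * B + A * ((δ/2) * (B / q) * (-(2*t)+2*u))) * I u
        + (A*B) * ((C / u) * D))
      = δ * (A*B*I u) * u⁻¹ - δ * (u - t) * (A*B*I u) / q - (A*C) * ((B*D) * u⁻¹) := by ring
    rw [step1, hP, hAC, hBD]
    field_simp
    rw [hqdef]
    ring
  · -- limit
    set L : ℝ → ℝ := fun u => 1/δ - (1 - 2*t*u + u^2)^(δ/2) * ((1 - 3*u)^(-(δ/2)) / δ) with hL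
    set U : ℝ → ℝ := fun u => 1/δ - (1 - 2*t*u + u^2)^(δ/2) * ((1 + 3*u)^(-(δ/2)) / δ) with hU
    have h14 : Set.Ioo (0:ℝ) (1/4) ∈ nhdsWithin 0 (Set.Ioi 0) :=
      Ioo_mem_nhdsGT_of_mem ⟨le_refl 0, by norm_num⟩
    have hbound : ∀ u ∈ Set.Ioo (0:ℝ) (1/4), L u ≤ Φ u ∧ Φ u ≤ U u := by
      rintro u ⟨hu0, hu4⟩
      have h3u : (0:ℝ) < 1 - 3*u := by linarith
      have h3u' : (0:ℝ) < 1 + 3*u := by linarith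
      have hpt : ∀ v ∈ Set.Icc (0:ℝ) u,
          v ^ (δ-1) * (1 + 3*u)^(-(δ/2)) ≤ f v ∧
          f v ≤ v ^ (δ-1) * (1 - 3*u)^(-(δ/2)) := by
        rintro v ⟨hv0, hvu⟩
        have hq1 : 1 - 3*u ≤ 1 - 2*t*v + v^2 := by nlinarith
        have hq2 : 1 - 2*t*v + v^2 ≤ 1 + 3*u := by nlinarith
        have hvnn : (0:ℝ) ≤ v ^ (δ-1) := Real.rpow_nonneg hv0 _
        constructor
        · exact mul_le_mul_of_nonneg_left
            (Real.rpow_le_rpow_of_nonpos (hQ v) hq2 (by linarith)) hvnn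
        · exact mul_le_mul_of_nonneg_left
            (Real.rpow_le_rpow_of_nonpos h3u hq1 (by linarith)) hvnn
      have hpow : (∫ v in (0:ℝ)..u, v ^ (δ-1)) = u^δ/δ := by
        rw [integral_rpow (Or.inl (by linarith))]
        rw [show δ-1+1 = δ by ring, Real.zero_rpow hδ.ne']
        ring
      have hIc : ∀ c : ℝ, (∫ v in (0:ℝ)..u, v ^ (δ-1) * c) = u^δ/δ * c := by
        intro c; rw [intervalIntegral.integral_mul_const, hpow]
      have hIle : I u ≤ u^δ/δ * (1 - 3*u)^(-(δ/2)) := by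
        rw [← hIc]
        exact intervalIntegral.integral_mono_on hu0.le (hint u)
          ((intervalIntegral.intervalIntegrable_rpow' (by linarith)).mul_const _)
          (fun v hv => (hpt v hv).2)
      have hIge : u^δ/δ * (1 + 3*u)^(-(δ/2)) ≤ I u := by
        rw [← hIc]
        exact intervalIntegral.integral_mono_on hu0.le
          ((intervalIntegral.intervalIntegrable_rpow' (by linarith)).mul_const _) (hint u)
          (fun v hv => (hpt v hv).1)
      have hABpos : (0:ℝ) ≤ u ^ (-δ) * (1 - 2*t*u + u^2)^(δ/2) :=
        mul_nonneg (Real.rpow_nonneg hu0.le _) (Real.rpow_nonneg (hQ u).le _)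
      have huA : u ^ (-δ) * u ^ δ = 1 := by
        rw [← Real.rpow_add hu0]; simp
      have key : ∀ c : ℝ, u ^ (-δ) * (1 - 2*t*u + u^2)^(δ/2) * (u^δ/δ * c)
          = (1 - 2*t*u + u^2)^(δ/2) * (c / δ) := by
        intro c
        linear_combination ((1 - 2*t*u + u^2)^(δ/2) * c / δ) * huA
      rw [hL, hU, hΦ' u hu0]
      constructor
      · have := mul_le_mul_of_nonneg_left hIle hABpos
        rw [key] at this
        simp only []
        linarith
      · have := mul_le_mul_of_nonneg_left hIge hABpos
        rw [key] at this
        simp only []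
        linarith
    have hcL : Filter.Tendsto L (nhdsWithin 0 (Set.Ioi 0)) (nhds 0) := by
      have c1 : ContinuousAt (fun u : ℝ => (1 - 2*t*u + u^2) ^ (δ/2)) 0 :=
        ContinuousAt.rpow_const (by fun_prop) (Or.inl (by norm_num))
      have c2 : ContinuousAt (fun u : ℝ => (1 - 3*u) ^ (-(δ/2)) / δ) 0 :=
        (ContinuousAt.rpow_const (by fun_prop) (Or.inl (by norm_num))).div_const δ
      have : ContinuousAt L 0 := (continuousAt_const.sub (c1.mul c2))
      have h0 : L 0 = 0 := by
        simp [hL, Real.one_rpow]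
      have := this.continuousWithinAt (s := Set.Ioi (0:ℝ))
      rw [ContinuousWithinAt, h0] at this
      exact this
    have hcU : Filter.Tendsto U (nhdsWithin 0 (Set.Ioi 0)) (nhds 0) := by
      have c1 : ContinuousAt (fun u : ℝ => (1 - 2*t*u + u^2) ^ (δ/2)) 0 :=
        ContinuousAt.rpow_const (by fun_prop) (Or.inl (by norm_num))
      have c2 : ContinuousAt (fun u : ℝ => (1 + 3*u) ^ (-(δ/2)) / δ) 0 :=
        (ContinuousAt.rpow_const (by fun_prop) (Or.inl (by norm_num))).div_const δ
      have : ContinuousAt U 0 := (continuousAt_const.sub (c1.mul c2))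
      have h0 : U 0 = 0 := by
        simp [hU, Real.one_rpow]
      have := this.continuousWithinAt (s := Set.Ioi (0:ℝ))
      rw [ContinuousWithinAt, h0] at this
      exact this
    exact tendsto_of_tendsto_of_tendsto_of_le_of_le' hcL hcU
      (Filter.eventually_of_mem h14 (fun u hu => (hbound u hu).1))
      (Filter.eventually_of_mem h14 (fun u hu => (hbound u hu).2))
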